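/- arXiv:2102.05170 — 5 statements merged into one kernel-verified Lean document; each statement's English description precedes it below -/
import Mathlib

section
/- If A_1, ..., A_n are pairwise independent events each of probability p, then the probability that exactly one of them occurs is at least n·p·max(0, 1 − (n−1)p). -/
open MeasureTheory

theorem stmt_0 {Ω : Type*} [MeasurableSpace Ω] (μ : Measure Ω) [IsProbabilityMeasure μ]
    (n : ℕ) (p : ℝ) (hp0 : 0 ≤ p) (hp1 : p ≤ 1)
    (A : Fin n → Set Ω) (hA : ∀ i, MeasurableSet (A i))
    (hprob : ∀ i, μ (A i) = ENNReal.ofReal p)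
    (hpair : ∀ i j, i ≠ j → μ (A i ∩ A j) = ENNReal.ofReal (p ^ 2)) :
    ENNReal.ofReal ((n : ℝ) * p * max 0 (1 - ((n : ℝ) - 1) * p)) ≤
      μ {ω | (∑ i, (A i).indicator (fun _ => (1 : ℕ)) ω) = 1} := by
  rcases Nat.eq_zero_or_pos n with hn | hn
  · subst hn; simp
  rcases le_or_gt (1 - ((n : ℝ) - 1) * p) 0 with h | h
  · rw [max_eq_left h]; simp
  rw [max_eq_right h.le]
  have hn1 : ((n - 1 : ℕ) : ℝ) = (n : ℝ) - 1 := by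
    push_cast [Nat.cast_sub hn]; ring
  have hn1nn : (0:ℝ) ≤ (n : ℝ) - 1 := by
    rw [← hn1]; positivity
  set E : Set Ω := {ω | (∑ i, (A i).indicator (fun _ => (1 : ℕ)) ω) = 1} with hE
  set B : Fin n → Set Ω := fun i => A i \ ⋃ j ∈ Finset.univ.erase i, A j with hB
  have hBmeas : ∀ i, MeasurableSet (B i) := fun i =>
    (hA i).diff (MeasurableSet.biUnion (Finset.univ.erase i).countable_toSet fun j _ => hA j)
  have hBsub : ∀ i, B i ⊆ E := by
    intro i ω hω
    obtain ⟨hωi, hωj⟩ := hω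
    simp only [Set.mem_iUnion, not_exists] at hωj
    have : ∀ j, j ≠ i → ω ∉ A j := by
      intro j hj
      exact fun hmem => hωj j (Finset.mem_erase.mpr ⟨hj, Finset.mem_univ j⟩) hmem
    show (∑ j, (A j).indicator (fun _ => (1 : ℕ)) ω) = 1
    rw [Finset.sum_eq_single i]
    · simp [Set.indicator_of_mem hωi]
    · intro j _ hj
      simp [Set.indicator_of_notMem (this j hj)]
    · simp
  have hdisj : Pairwise (Function.onFun Disjoint B) := by
    intro i j hij
    rw [Function.onFun, Set.disjoint_left]
    intro ω hωi hωj
    obtain ⟨_, hωj2⟩ := hωj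
    simp only [Set.mem_iUnion, not_exists] at hωj2
    exact hωj2 i (Finset.mem_erase.mpr ⟨hij, Finset.mem_univ i⟩) hωi.1
  have key : ∀ i, ENNReal.ofReal (p - ((n : ℝ) - 1) * p ^ 2) ≤ μ (B i) := by
    intro i
    have hsub : A i ⊆ B i ∪ ⋃ j ∈ Finset.univ.erase i, (A i ∩ A j) := by
      intro ω hω
      by_cases hb : ω ∈ B i
      · exact Or.inl hb
      · right
        simp only [hB, Set.mem_diff, not_and, not_not] at hb
        have := hb hω
        simp only [Set.mem_iUnion] at this ⊢
        obtain ⟨j, hj, hωj⟩ := this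
        exact ⟨j, hj, hω, hωj⟩
    have h1 : μ (A i) ≤ μ (B i) + ∑ j ∈ Finset.univ.erase i, μ (A i ∩ A j) := by
      calc μ (A i) ≤ μ (B i ∪ ⋃ j ∈ Finset.univ.erase i, (A i ∩ A j)) := measure_mono hsub
        _ ≤ μ (B i) + μ (⋃ j ∈ Finset.univ.erase i, (A i ∩ A j)) := measure_union_le _ _
        _ ≤ μ (B i) + ∑ j ∈ Finset.univ.erase i, μ (A i ∩ A j) := by
            gcongr
            exact measure_biUnion_finset_le _ _
    have h2 : ∑ j ∈ Finset.univ.erase i, μ (A i ∩ A j) = ENNReal.ofReal (((n:ℝ) - 1) * p ^ 2) := by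
      rw [Finset.sum_congr rfl fun j hj => hpair i j (Finset.ne_of_mem_erase hj).symm]
      rw [Finset.sum_const, Finset.card_erase_of_mem (Finset.mem_univ i), Finset.card_univ,
        Fintype.card_fin, nsmul_eq_mul, ENNReal.ofReal_mul hn1nn, ← hn1,
        ENNReal.ofReal_natCast]
    rw [hprob i, h2] at h1
    rw [ENNReal.ofReal_sub _ (by positivity)]
    exact tsub_le_iff_right.mpr h1
  calc ENNReal.ofReal ((n : ℝ) * p * (1 - ((n : ℝ) - 1) * p))
      = ENNReal.ofReal ((n : ℝ) * (p - ((n : ℝ) - 1) * p ^ 2)) := by ring_nf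
    _ = (n : ENNReal) * ENNReal.ofReal (p - ((n : ℝ) - 1) * p ^ 2) := by
        rw [ENNReal.ofReal_mul (by positivity), ENNReal.ofReal_natCast]
    _ = ∑ _i : Fin n, ENNReal.ofReal (p - ((n : ℝ) - 1) * p ^ 2) := by
        rw [Finset.sum_const, Finset.card_univ, Fintype.card_fin, nsmul_eq_mul]
    _ ≤ ∑ i, μ (B i) := Finset.sum_le_sum fun i _ => key i
    _ = μ (⋃ i, B i) := by rw [measure_iUnion hdisj hBmeas, tsum_fintype]
    _ ≤ μ E := measure_mono (Set.iUnion_subset hBsub)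
end

section
/- Let n ≥ 2, p ∈ [0,1], and k ∈ {1,...,n−1} with (k−1)/(n−1) ≤ p ≤ k/(n−1). Define x_k = (np/k)(k − (n−1)p)/C(n,k), x_{k+1} = (np/(k+1))((n−1)p − (k−1))/C(n,k+1), and x_m = 0 for other m in {1,...,n}. Then Σ_{m=1}^n C(n−2, m−2) x_m = p². -/
lemma aux1 (m j : ℕ) :
    (m + 2) * (m + 1) * m.choose j = (m + 2).choose (j + 2) * ((j + 2) * (j + 1)) := by
  have h1 : (m + 1) * m.choose j = (m + 1).choose (j + 1) * (j + 1) :=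
    Nat.add_one_mul_choose_eq m j
  have h2 : (m + 2) * (m + 1).choose (j + 1) = (m + 2).choose (j + 2) * (j + 2) :=
    Nat.add_one_mul_choose_eq (m + 1) (j + 1)
  calc (m + 2) * (m + 1) * m.choose j = (m + 2) * ((m + 1) * m.choose j) := by ring
    _ = (m + 2) * ((m + 1).choose (j + 1) * (j + 1)) := by rw [h1]
    _ = ((m + 2) * (m + 1).choose (j + 1)) * (j + 1) := by ring
    _ = ((m + 2).choose (j + 2) * (j + 2)) * (j + 1) := by rw [h2]
    _ = _ := by ring

theorem stmt_9 (n k : ℕ) (hn : 2 ≤ n) (hk1 : 1 ≤ k) (hkn : k ≤ n - 1)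
    (p : ℝ) (hp0 : 0 ≤ p) (hp1 : p ≤ 1)
    (hlo : ((k : ℝ) - 1) / ((n : ℝ) - 1) ≤ p) (hhi : p ≤ (k : ℝ) / ((n : ℝ) - 1))
    (x : ℕ → ℝ)
    (hxk : x k = (n : ℝ) * p / (k : ℝ) * ((k : ℝ) - ((n : ℝ) - 1) * p) / (n.choose k : ℝ))
    (hxk1 : x (k + 1) =
      (n : ℝ) * p / ((k : ℝ) + 1) * (((n : ℝ) - 1) * p - ((k : ℝ) - 1)) / (n.choose (k + 1) : ℝ))
    (hx0 : ∀ m ∈ Finset.Icc 1 n, m ≠ k → m ≠ k + 1 → x m = 0) :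
    ∑ m ∈ Finset.Icc 2 n, ((n - 2).choose (m - 2) : ℝ) * x m = p ^ 2 := by
  obtain ⟨m, rfl⟩ : ∃ m, n = m + 2 := ⟨n - 2, by omega⟩
  have hkm : k ≤ m + 1 := by omega
  have hn0 : ((m : ℝ) + 2) ≠ 0 := by positivity
  have hn1 : ((m : ℝ) + 1) ≠ 0 := by positivity
  have hk0 : (k : ℝ) ≠ 0 := Nat.cast_ne_zero.mpr (by omega)
  have hk10 : ((k : ℝ) + 1) ≠ 0 := by positivity
  have hA : ((m + 2).choose k : ℝ) ≠ 0 :=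
    Nat.cast_ne_zero.mpr (Nat.choose_pos (by omega : k ≤ m + 2)).ne'
  have hB : ((m + 2).choose (k + 1) : ℝ) ≠ 0 :=
    Nat.cast_ne_zero.mpr (Nat.choose_pos (by omega : k + 1 ≤ m + 2)).ne'
  obtain ⟨j, rfl⟩ : ∃ j, k = j + 1 := ⟨k - 1, by omega⟩
  have hB2 : ((m : ℝ) + 2) * ((m : ℝ) + 1) * (m.choose j : ℝ) =
      ((m + 2).choose (j + 2) : ℝ) * (((j : ℝ) + 2) * ((j : ℝ) + 1)) := by
    exact_mod_cast aux1 m j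
  have hcast : ∀ a : ℕ, ((a : ℝ)) = a := fun a => rfl
  -- split on whether j = 0 (k = 1)
  rcases Nat.eq_zero_or_pos j with hj0 | hjpos
  · subst hj0
    -- only m = 2 = k+1 contributes
    have hsum : ∑ i ∈ Finset.Icc 2 (m + 2), ((m + 2 - 2).choose (i - 2) : ℝ) * x i =
        ((m + 2 - 2).choose (2 - 2) : ℝ) * x 2 := by
      apply Finset.sum_eq_single_of_mem
      · simp [Finset.mem_Icc]
      · intro i hi hne
        simp only [Finset.mem_Icc] at hi
        rw [hx0 i (Finset.mem_Icc.mpr ⟨by omega, hi.2⟩) (by omega) (by omega), mul_zero]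
    rw [hsum]
    simp only [Nat.add_sub_cancel, Nat.sub_self, Nat.choose_zero_right, Nat.cast_one, one_mul]
    have hx2 := hxk1
    norm_num at hx2 ⊢
    rw [hx2]
    have hB2' := hB2
    norm_num [Nat.choose_zero_right] at hB2'
    field_simp
    nlinarith [hB2', sq_nonneg p]
  · -- k = j+1 ≥ 2: two terms
    have hA2 : ((m : ℝ) + 2) * ((m : ℝ) + 1) * (m.choose (j - 1) : ℝ) =
        ((m + 2).choose (j + 1) : ℝ) * (((j : ℝ) + 1) * (j : ℝ)) := by
      obtain ⟨i, rfl⟩ : ∃ i, j = i + 1 := ⟨j - 1, by omega⟩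
      have := aux1 m i
      push_cast
      exact_mod_cast this
    have hsum : ∑ i ∈ Finset.Icc 2 (m + 2), ((m + 2 - 2).choose (i - 2) : ℝ) * x i =
        ((m + 2 - 2).choose (j + 1 - 2) : ℝ) * x (j + 1) +
        ((m + 2 - 2).choose (j + 1 + 1 - 2) : ℝ) * x (j + 1 + 1) := by
      apply Finset.sum_eq_add_of_mem
      · exact Finset.mem_Icc.mpr ⟨by omega, by omega⟩
      · exact Finset.mem_Icc.mpr ⟨by omega, by omega⟩
      · omega
      · intro i hi h12
        simp only [Finset.mem_Icc] at hi
        rw [hx0 i (Finset.mem_Icc.mpr ⟨by omega, hi.2⟩) h12.1 h12.2, mul_zero]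
    rw [hsum, hxk, hxk1]
    have e1 : j + 1 - 2 = j - 1 := by omega
    have e2 : j + 1 + 1 - 2 = j := by omega
    have e3 : m + 2 - 2 = m := by omega
    rw [e1, e2, e3]
    have ha : (m.choose (j - 1) : ℝ) =
        ((m + 2).choose (j + 1) : ℝ) * (((j : ℝ) + 1) * (j : ℝ)) / (((m : ℝ) + 2) * ((m : ℝ) + 1)) := by
      field_simp
      linarith [hA2]
    have hb : (m.choose j : ℝ) =
        ((m + 2).choose (j + 2) : ℝ) * (((j : ℝ) + 2) * ((j : ℝ) + 1)) / (((m : ℝ) + 2) * ((m : ℝ) + 1)) := by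
      field_simp
      linarith [hB2]
    rw [ha, hb]
    have e4 : j + 1 + 1 = j + 2 := rfl
    rw [e4]
    push_cast
    field_simp
    ring
end

section
/- For every n ≥ 2 and p ∈ [0,1], there exists a probability space and pairwise independent events A_1, ..., A_n, each of probability p, such that the probability that exactly one of them occurs equals n·p·max(0, 1 − (n−1)p). -/
open MeasureTheory Finset
open scoped ENNReal Classical

lemma count_supsets {n : ℕ} (u : Finset (Fin n)) (m : ℕ) (hum : u.card ≤ m) :
    (Finset.univ.filter (fun s : Finset (Fin n) => u ⊆ s ∧ s.card = m)).card
      = (n - u.card).choose (m - u.card) := by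
  have h1 : (Finset.univ \ u).card = n - u.card := by
    rw [Finset.card_sdiff_of_subset (Finset.subset_univ u), Finset.card_univ, Fintype.card_fin]
  rw [← h1, ← Finset.card_powersetCard (m - u.card) (Finset.univ \ u)]
  apply Finset.card_bij' (fun s _ => s \ u) (fun t _ => t ∪ u)
  · intro s hs
    simp only [Finset.mem_filter] at hs
    rw [Finset.mem_powersetCard]
    exact ⟨Finset.sdiff_subset_sdiff (Finset.subset_univ s) le_rfl,
      by rw [Finset.card_sdiff_of_subset hs.2.1, hs.2.2]⟩
  · intro t ht
    rw [Finset.mem_powersetCard] at ht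
    have hd : Disjoint t u := Finset.disjoint_of_subset_left ht.1 Finset.sdiff_disjoint
    simp only [Finset.mem_filter, Finset.mem_univ, true_and]
    refine ⟨Finset.subset_union_right, ?_⟩
    rw [Finset.card_union_of_disjoint hd, ht.2]
    omega
  · intro s hs
    simp only [Finset.mem_filter] at hs
    exact Finset.sdiff_union_of_subset hs.2.1
  · intro t ht
    rw [Finset.mem_powersetCard] at ht
    exact Finset.union_sdiff_cancel_right
      (Finset.disjoint_of_subset_left ht.1 Finset.sdiff_disjoint)

lemma count_card (n m : ℕ) :
    (Finset.univ.filter fun s : Finset (Fin n) => s.card = m).card = n.choose m := by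
  have := count_supsets (∅ : Finset (Fin n)) m (by simp)
  simpa using this

lemma count_mem_card {n : ℕ} (i : Fin n) (m : ℕ) (hm : 1 ≤ m) :
    (Finset.univ.filter fun s : Finset (Fin n) => i ∈ s ∧ s.card = m).card
      = (n-1).choose (m-1) := by
  have := count_supsets ({i} : Finset (Fin n)) m (by simpa)
  simpa [Finset.singleton_subset_iff] using this

lemma count_pair_card {n : ℕ} (i j : Fin n) (hij : i ≠ j) (m : ℕ) (hm : 2 ≤ m) :
    (Finset.univ.filter fun s : Finset (Fin n) => (i ∈ s ∧ j ∈ s) ∧ s.card = m).card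
      = (n-2).choose (m-2) := by
  have h2 : ({i, j} : Finset (Fin n)).card = 2 := Finset.card_pair hij
  have := count_supsets ({i, j} : Finset (Fin n)) m (by omega)
  rw [h2] at this
  rw [← this]
  congr 1
  apply Finset.filter_congr
  intro s _
  simp [Finset.insert_subset_iff, Finset.singleton_subset_iff]

lemma count_pair_one {n : ℕ} (i j : Fin n) (hij : i ≠ j) :
    (Finset.univ.filter fun s : Finset (Fin n) => (i ∈ s ∧ j ∈ s) ∧ s.card = 1).card = 0 := by
  rw [Finset.card_eq_zero, Finset.filter_eq_empty_iff]
  rintro s - ⟨⟨hi, hj⟩, hc⟩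
  have : ({i, j} : Finset (Fin n)) ⊆ s := by
    simp [Finset.insert_subset_iff, Finset.singleton_subset_iff, hi, hj]
  have := Finset.card_le_card this
  rw [Finset.card_pair hij, hc] at this
  omega
section
variable {n : ℕ} (w : Finset (Fin n) → ℝ≥0∞)

noncomputable def myMeas : @Measure (Finset (Fin n)) ⊤ :=
  ∑ s : Finset (Fin n), w s • @Measure.dirac (Finset (Fin n)) ⊤ s

lemma myMeas_apply (B : Set (Finset (Fin n))) :
    myMeas w B = ∑ s ∈ Finset.univ.filter (· ∈ B), w s := by
  rw [myMeas, Measure.finset_sum_apply]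
  rw [Finset.sum_filter]
  congr 1
  ext s
  rw [Measure.smul_apply, @Measure.dirac_apply' _ ⊤ _ _ (by trivial : MeasurableSet[⊤] B)]
  by_cases h : s ∈ B <;> simp [h, Set.indicator_apply]
end

section
variable {n : ℕ}

lemma myMeas_eval (a b c : ℝ≥0∞) (k : ℕ) (P : Finset (Fin n) → Prop) [DecidablePred P] :
    myMeas (fun s => (if s.card = k+1 then a else 0) + (if s.card = k+2 then b else 0)
        + (if s = ∅ then c else 0)) {s | P s}
      = (Finset.univ.filter fun s : Finset (Fin n) => P s ∧ s.card = k+1).card * a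
        + (Finset.univ.filter fun s : Finset (Fin n) => P s ∧ s.card = k+2).card * b
        + (if P ∅ then c else 0) := by
  rw [myMeas_apply]
  have hmem : ∀ s : Finset (Fin n), s ∈ {s | P s} ↔ P s := fun s => Iff.rfl
  rw [Finset.sum_add_distrib, Finset.sum_add_distrib]
  congr 1
  · congr 1
    · rw [← Finset.sum_filter, Finset.filter_filter, Finset.sum_const, nsmul_eq_mul]
      congr 2
      congr 1
      ext s
      simp [Set.mem_setOf_eq]
    · rw [← Finset.sum_filter, Finset.filter_filter, Finset.sum_const, nsmul_eq_mul]
      congr 2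
      congr 1
      ext s
      simp [Set.mem_setOf_eq]
  · rw [Finset.sum_ite_eq' _ ∅ (fun _ => c)]
    simp only [Finset.mem_filter, Finset.mem_univ, true_and]; rfl
end

lemma sum_ind {n : ℕ} (s : Finset (Fin n)) :
    (∑ i, Set.indicator {t : Finset (Fin n) | i ∈ t} (fun _ => (1:ℕ)) s) = s.card := by
  simp only [Set.indicator_apply, Set.mem_setOf_eq]
  rw [Finset.sum_ite_mem, Finset.univ_inter, Finset.card_eq_sum_ones]
lemma realCore (n k : ℕ) (p t : ℝ) (hn : 2 ≤ n) (hk2 : k + 2 ≤ n)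
    (hp0 : 0 ≤ p) (ht0 : 0 ≤ t) (ht1 : t < 1)
    (ht : ((n:ℝ) - 1) * p = k + t) :
    ((n.choose (k+1) : ℝ) * (p * (1 - t) / ((n-1).choose k : ℝ))
      + (n.choose (k+2) : ℝ) * (p * t / ((n-1).choose (k+1) : ℝ)) ≤ 1)
    ∧ (((n-1).choose k : ℝ) * (p * (1 - t) / ((n-1).choose k : ℝ))
      + ((n-1).choose (k+1) : ℝ) * (p * t / ((n-1).choose (k+1) : ℝ)) = p)
    ∧ (k = 0 → (p * t / ((n-1).choose (k+1) : ℝ)) = p * p)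
    ∧ (1 ≤ k → ((n-2).choose (k-1) : ℝ) * (p * (1 - t) / ((n-1).choose k : ℝ))
      + ((n-2).choose k : ℝ) * (p * t / ((n-1).choose (k+1) : ℝ)) = p * p) := by
  have hn1 : (1:ℝ) ≤ (n:ℝ) - 1 := by
    have : (2:ℝ) ≤ n := by exact_mod_cast hn
    linarith
  have hn1' : ((n:ℝ) - 1) ≠ 0 := by linarith
  have hc0 : 0 < ((n-1).choose k : ℝ) := by
    exact_mod_cast Nat.choose_pos (by omega : k ≤ n - 1)
  have hc1 : 0 < ((n-1).choose (k+1) : ℝ) := by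
    exact_mod_cast Nat.choose_pos (by omega : k + 1 ≤ n - 1)
  have hb1n : n * (n-1).choose k = n.choose (k+1) * (k+1) := by
    have := Nat.add_one_mul_choose_eq (n-1) k
    rwa [show n - 1 + 1 = n from by omega] at this
  have hb2n : n * (n-1).choose (k+1) = n.choose (k+2) * (k+2) := by
    have := Nat.add_one_mul_choose_eq (n-1) (k+1)
    rwa [show n - 1 + 1 = n from by omega] at this
  have hb4n : (n-1) * (n-2).choose k = (n-1).choose (k+1) * (k+1) := by
    have := Nat.add_one_mul_choose_eq (n-2) k
    rwa [show n - 2 + 1 = n - 1 from by omega] at this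
  have hb1 : (n:ℝ) * ((n-1).choose k : ℝ) = (n.choose (k+1) : ℝ) * ((k:ℝ)+1) := by
    exact_mod_cast hb1n
  have hb2 : (n:ℝ) * ((n-1).choose (k+1) : ℝ) = (n.choose (k+2) : ℝ) * ((k:ℝ)+2) := by
    exact_mod_cast hb2n
  have hn1c : ((n - 1 : ℕ) : ℝ) = (n:ℝ) - 1 := by
    push_cast [Nat.cast_sub (by omega : 1 ≤ n)]; ring
  have hb4 : ((n:ℝ)-1) * ((n-2).choose k : ℝ) = ((n-1).choose (k+1) : ℝ) * ((k:ℝ)+1) := by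
    rw [← hn1c]; exact_mod_cast hb4n
  have hk1p : ((k:ℝ)+1) ≠ 0 := by positivity
  have hk2p : ((k:ℝ)+2) ≠ 0 := by positivity
  refine ⟨?_, ?_, ?_, ?_⟩
  · -- probability bound
    have hkn : (k:ℝ) + 2 ≤ n := by exact_mod_cast hk2
    have hA : (n.choose (k+1) : ℝ) * (p * (1-t) / ((n-1).choose k : ℝ))
        = (n:ℝ)*p*(1-t)/((k:ℝ)+1) := by
      rw [mul_div_assoc', div_eq_div_iff hc0.ne' hk1p]
      linear_combination (-(p*(1-t)))*hb1
    have hB : (n.choose (k+2) : ℝ) * (p * t / ((n-1).choose (k+1) : ℝ))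
        = (n:ℝ)*p*t/((k:ℝ)+2) := by
      rw [mul_div_assoc', div_eq_div_iff hc1.ne' hk2p]
      linear_combination (-(p*t))*hb2
    rw [hA, hB, div_add_div _ _ hk1p hk2p, div_le_one (by positivity)]
    have hsub1 : (n:ℝ)*p*(1-t)*((k:ℝ)+2)*((n:ℝ)-1) = (n:ℝ)*((k:ℝ)+t)*(1-t)*((k:ℝ)+2) := by
      linear_combination ((n:ℝ)*(1-t)*((k:ℝ)+2))*ht
    have hsub2 : (n:ℝ)*p*t*((k:ℝ)+1)*((n:ℝ)-1) = (n:ℝ)*((k:ℝ)+t)*t*((k:ℝ)+1) := by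
      linear_combination ((n:ℝ)*t*((k:ℝ)+1))*ht
    have hint1 : (0:ℝ) ≤ ((k:ℝ)+1)*((n:ℝ)-(k:ℝ)-2) := by
      have : (0:ℝ) ≤ (n:ℝ)-(k:ℝ)-2 := by linarith
      positivity
    have hint2 : (0:ℝ) ≤ (n:ℝ)*(1-t)^2 := by positivity
    have hn2 : (0:ℝ) ≤ (n:ℝ)-2 := by linarith
    nlinarith [hsub1, hsub2, hint1, hint2, hn2]
  · field_simp
    ring
  · intro hk0
    subst hk0
    have h1 : ((n-1).choose 1 : ℝ) = (n:ℝ) - 1 := by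
      rw [Nat.choose_one_right, hn1c]
    rw [zero_add, h1]
    rw [div_eq_iff hn1']
    linear_combination (-p) * ht
  · intro hk1
    have hb3n : (n-1) * (n-2).choose (k-1) = (n-1).choose k * k := by
      have := Nat.add_one_mul_choose_eq (n-2) (k-1)
      rwa [show n - 2 + 1 = n - 1 from by omega,
        Nat.sub_add_cancel hk1] at this
    have hb3 : ((n:ℝ)-1) * ((n-2).choose (k-1) : ℝ) = ((n-1).choose k : ℝ) * (k:ℝ) := by
      rw [← hn1c]; exact_mod_cast hb3n
    have e1 : ((n-2).choose (k-1) : ℝ) * (p*(1-t)/((n-1).choose k : ℝ))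
        = (k:ℝ)*p*(1-t)/((n:ℝ)-1) := by
      rw [mul_div_assoc', div_eq_div_iff hc0.ne' hn1']
      linear_combination (p*(1-t))*hb3
    have e2 : ((n-2).choose k : ℝ) * (p*t/((n-1).choose (k+1) : ℝ))
        = ((k:ℝ)+1)*p*t/((n:ℝ)-1) := by
      rw [mul_div_assoc', div_eq_div_iff hc1.ne' hn1']
      linear_combination (p*t)*hb4
    rw [e1, e2, ← add_div, div_eq_iff hn1']
    linear_combination (-p) * ht

theorem stmt_11 (n : ℕ) (hn : 2 ≤ n) (p : ℝ) (hp0 : 0 ≤ p) (hp1 : p ≤ 1) :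
    ∃ (Ω : Type) (_ : MeasurableSpace Ω) (μ : Measure Ω) (_ : IsProbabilityMeasure μ)
      (A : Fin n → Set Ω),
      (∀ i, MeasurableSet (A i)) ∧
      (∀ i, μ (A i) = ENNReal.ofReal p) ∧
      (∀ i j, i ≠ j → μ (A i ∩ A j) = μ (A i) * μ (A j)) ∧
      μ {ω | (∑ i, (A i).indicator (fun _ => (1 : ℕ)) ω) = 1} =
        ENNReal.ofReal ((n : ℝ) * p * max 0 (1 - ((n : ℝ) - 1) * p)) := by
  classical
  letI : MeasurableSpace (Finset (Fin n)) := ⊤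
  have hn2r : (2:ℝ) ≤ n := by exact_mod_cast hn
  by_cases hp : p = 1
  · -- p = 1 : use dirac at univ
    subst hp
    refine ⟨Finset (Fin n), inferInstance, Measure.dirac Finset.univ, ?_,
      fun i => {s | i ∈ s}, fun i => MeasurableSpace.measurableSet_top, ?_, ?_, ?_⟩
    · exact Measure.dirac.isProbabilityMeasure
    · intro i
      rw [Measure.dirac_apply' _ MeasurableSpace.measurableSet_top, ENNReal.ofReal_one]
      simp [Set.indicator_apply]
    · intro i j hij
      rw [Measure.dirac_apply' _ MeasurableSpace.measurableSet_top,
        Measure.dirac_apply' _ MeasurableSpace.measurableSet_top,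
        Measure.dirac_apply' _ MeasurableSpace.measurableSet_top]
      simp [Set.indicator_apply]
    · have hset : {ω : Finset (Fin n) | (∑ i, Set.indicator {s : Finset (Fin n) | i ∈ s}
          (fun _ => (1:ℕ)) ω) = 1} = {s : Finset (Fin n) | s.card = 1} := by
        ext s; simp only [Set.mem_setOf_eq, sum_ind]
      rw [hset, Measure.dirac_apply' _ MeasurableSpace.measurableSet_top]
      have h2 : (Finset.univ : Finset (Fin n)) ∉ {s : Finset (Fin n) | s.card = 1} := by
        simp only [Set.mem_setOf_eq, Finset.card_univ, Fintype.card_fin]; omega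
      rw [Set.indicator_of_notMem h2]
      have hmax : (1:ℝ) - ((n:ℝ) - 1) * 1 ≤ 0 := by linarith
      rw [max_eq_left hmax]
      simp
  · -- p < 1 : main construction
    have hp1' : p < 1 := lt_of_le_of_ne hp1 hp
    set k : ℕ := ⌊((n:ℝ)-1)*p⌋₊ with hkdef
    have hnp0 : 0 ≤ ((n:ℝ)-1)*p := by nlinarith
    set t : ℝ := ((n:ℝ)-1)*p - k with htdef
    have ht0 : 0 ≤ t := by
      have := Nat.floor_le hnp0
      simp only [htdef]; linarith
    have ht1 : t < 1 := by
      have := Nat.lt_floor_add_one (((n:ℝ)-1)*p)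
      simp only [htdef]; linarith
    have ht : ((n:ℝ) - 1) * p = k + t := by simp only [htdef]; ring
    have hk2 : k + 2 ≤ n := by
      have h1 : ((n:ℝ)-1)*p < (n:ℝ)-1 := by nlinarith
      have h2 : (k:ℝ) < (n:ℝ)-1 := by
        have := Nat.floor_le hnp0
        simp only [← hkdef] at this
        linarith
      have h3 : (k:ℝ) < ((n-1:ℕ):ℝ) := by
        rwa [Nat.cast_sub (by omega : 1 ≤ n), Nat.cast_one]
      have : k < n - 1 := by exact_mod_cast h3
      omega
    obtain ⟨hS1, hI2, hI30, hI31⟩ := realCore n k p t hn hk2 hp0 ht0 ht1 ht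
    have hc0 : (0:ℝ) < ((n-1).choose k : ℝ) := by
      exact_mod_cast Nat.choose_pos (by omega : k ≤ n - 1)
    set α : ℝ := p * (1 - t) / ((n-1).choose k : ℝ) with hαdef
    set β : ℝ := p * t / ((n-1).choose (k+1) : ℝ) with hβdef
    have hα0 : 0 ≤ α := by
      apply div_nonneg (mul_nonneg hp0 (by linarith)) (by positivity)
    have hβ0 : 0 ≤ β := by
      apply div_nonneg (mul_nonneg hp0 ht0) (by positivity)
    set γ : ℝ := 1 - (n.choose (k+1) : ℝ) * α - (n.choose (k+2) : ℝ) * β with hγdef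
    have hγ0 : 0 ≤ γ := by simp only [hγdef]; linarith
    have hcast : ∀ (c : ℕ) (x : ℝ), 0 ≤ x →
        (c:ℝ≥0∞) * ENNReal.ofReal x = ENNReal.ofReal ((c:ℝ)*x) := by
      intro c x hx
      rw [ENNReal.ofReal_mul (by positivity), ENNReal.ofReal_natCast]
    set μ := myMeas (fun s : Finset (Fin n) =>
      (if s.card = k+1 then ENNReal.ofReal α else 0)
      + (if s.card = k+2 then ENNReal.ofReal β else 0)
      + (if s = ∅ then ENNReal.ofReal γ else 0)) with hμdef
    have heval : ∀ (P : Finset (Fin n) → Prop) [DecidablePred P], μ {s | P s}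
        = (Finset.univ.filter fun s : Finset (Fin n) => P s ∧ s.card = k+1).card
            * ENNReal.ofReal α
          + (Finset.univ.filter fun s : Finset (Fin n) => P s ∧ s.card = k+2).card
            * ENNReal.ofReal β
          + (if P ∅ then ENNReal.ofReal γ else 0) := by
      intro P hP
      exact myMeas_eval (ENNReal.ofReal α) (ENNReal.ofReal β) (ENNReal.ofReal γ) k P
    -- probability of each event
    have hAi : ∀ i : Fin n, μ {s : Finset (Fin n) | i ∈ s} = ENNReal.ofReal p := by
      intro i
      rw [heval (fun s => i ∈ s)]
      rw [count_mem_card i (k+1) (by omega), count_mem_card i (k+2) (by omega),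
        if_neg (Finset.notMem_empty i), add_zero]
      simp only [Nat.add_sub_cancel]
      rw [hcast _ _ hα0, hcast _ _ hβ0, ← ENNReal.ofReal_add (by positivity) (by positivity)]
      rw [show k + 2 - 1 = k + 1 from rfl]
      exact congrArg ENNReal.ofReal hI2
    -- total mass
    have hprob : μ Set.univ = 1 := by
      have huniv : (Set.univ : Set (Finset (Fin n))) = {s | True} := by rfl
      rw [huniv, heval (fun _ => True)]
      simp only [Finset.filter_congr_decidable, true_and, if_pos trivial]
      rw [count_card n (k+1), count_card n (k+2),
        hcast _ _ hα0, hcast _ _ hβ0, ← ENNReal.ofReal_add (by positivity) (by positivity),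
        ← ENNReal.ofReal_add (by positivity) hγ0]
      rw [show (n.choose (k+1):ℝ)*α + (n.choose (k+2):ℝ)*β + γ = 1 by
        simp only [hγdef]; ring]
      exact ENNReal.ofReal_one
    -- pairwise independence
    have hpair : ∀ i j : Fin n, i ≠ j →
        μ {s : Finset (Fin n) | i ∈ s ∧ j ∈ s} = ENNReal.ofReal p * ENNReal.ofReal p := by
      intro i j hij
      rw [heval (fun s => i ∈ s ∧ j ∈ s), ← ENNReal.ofReal_mul hp0]
      rw [if_neg (by simp : ¬(i ∈ (∅ : Finset (Fin n)) ∧ j ∈ (∅ : Finset (Fin n)))), add_zero]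
      by_cases hk0 : k = 0
      · have hf1 : (Finset.univ.filter fun s : Finset (Fin n) =>
            (i ∈ s ∧ j ∈ s) ∧ s.card = k+1).card = 0 := by
          rw [Finset.card_eq_zero, Finset.filter_eq_empty_iff]
          rintro s - ⟨⟨hi, hj⟩, hc⟩
          have hsub : ({i, j} : Finset (Fin n)) ⊆ s := by
            simp [Finset.insert_subset_iff, Finset.singleton_subset_iff, hi, hj]
          have := Finset.card_le_card hsub
          rw [Finset.card_pair hij, hc] at this
          omega
        rw [hf1, count_pair_card i j hij (k+2) (by omega)]
        rw [show k + 2 - 2 = k from by omega, hk0]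
        simp only [Nat.cast_zero, zero_mul, zero_add, Nat.choose_zero_right,
          Nat.cast_one, one_mul]
        rw [hI30 hk0, ENNReal.ofReal_mul hp0]
      · rw [count_pair_card i j hij (k+1) (by omega), count_pair_card i j hij (k+2) (by omega)]
        have e1 : k + 1 - 2 = k - 1 := by omega
        have e2 : k + 2 - 2 = k := by omega
        rw [e1, e2, hcast _ _ hα0, hcast _ _ hβ0,
          ← ENNReal.ofReal_add (by positivity) (by positivity)]
        exact congrArg ENNReal.ofReal (hI31 (by omega))
    -- exactly one
    have hone : μ {s : Finset (Fin n) | s.card = 1}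
        = ENNReal.ofReal ((n : ℝ) * p * max 0 (1 - ((n : ℝ) - 1) * p)) := by
      rw [heval (fun s => s.card = 1)]
      rw [if_neg (by simp : ¬((∅:Finset (Fin n)).card = 1)), add_zero]
      by_cases hk0 : k = 0
      · have hf1 : (Finset.univ.filter fun s : Finset (Fin n) =>
            s.card = 1 ∧ s.card = k+1).card = n := by
          rw [Finset.filter_congr (fun s _ => by rw [hk0]; simp :
            ∀ s ∈ (Finset.univ : Finset (Finset (Fin n))),
              (s.card = 1 ∧ s.card = k+1) ↔ (s.card = 1))]
          rw [count_card n 1, Nat.choose_one_right]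
        have hf2 : (Finset.univ.filter fun s : Finset (Fin n) =>
            s.card = 1 ∧ s.card = k+2).card = 0 := by
          rw [Finset.card_eq_zero, Finset.filter_eq_empty_iff]
          rintro s - ⟨h1, h2⟩; omega
        rw [hf1, hf2]
        simp only [Nat.cast_zero, zero_mul, add_zero]
        have hmax : max 0 (1 - ((n:ℝ)-1)*p) = 1 - ((n:ℝ)-1)*p := by
          rw [max_eq_right]
          have : ((n:ℝ)-1)*p = t := by rw [ht, hk0]; norm_num
          linarith
        rw [hmax, hcast _ _ hα0]
        congr 1
        have hab : ((n:ℝ)-1)*p = t := by rw [ht, hk0]; norm_num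
        rw [hαdef, hk0]
        simp only [Nat.choose_zero_right, Nat.cast_one, div_one]
        rw [← hab]; ring
      · have hf1 : (Finset.univ.filter fun s : Finset (Fin n) =>
            s.card = 1 ∧ s.card = k+1).card = 0 := by
          rw [Finset.card_eq_zero, Finset.filter_eq_empty_iff]
          rintro s - ⟨h1, h2⟩; omega
        have hf2 : (Finset.univ.filter fun s : Finset (Fin n) =>
            s.card = 1 ∧ s.card = k+2).card = 0 := by
          rw [Finset.card_eq_zero, Finset.filter_eq_empty_iff]
          rintro s - ⟨h1, h2⟩; omega
        rw [hf1, hf2]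
        have hmax : max 0 (1 - ((n:ℝ)-1)*p) = 0 := by
          rw [max_eq_left]
          have hk1 : (1:ℝ) ≤ k := by exact_mod_cast Nat.one_le_iff_ne_zero.mpr hk0
          linarith [ht0, ht]
        rw [hmax]
        simp
    refine ⟨Finset (Fin n), inferInstance, μ, ⟨hprob⟩, fun i => {s | i ∈ s},
      fun i => MeasurableSpace.measurableSet_top, hAi, ?_, ?_⟩
    · intro i j hij
      rw [hAi i, hAi j]
      have : ({s : Finset (Fin n) | i ∈ s} ∩ {s | j ∈ s}) = {s | i ∈ s ∧ j ∈ s} := rfl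
      rw [this, hpair i j hij]
    · have hset : {ω : Finset (Fin n) | (∑ i, Set.indicator {s : Finset (Fin n) | i ∈ s}
          (fun _ => (1:ℕ)) ω) = 1} = {s : Finset (Fin n) | s.card = 1} := by
        ext s; simp only [Set.mem_setOf_eq, sum_ind]
      rw [hset, hone]
end

section
/- For every n ≥ 2 and p with 1/(n−1) ≤ p ≤ 1, there exist pairwise independent events A_1, ..., A_n each of probability p such that with probability 1 the number of occurring events is not exactly 1. -/
open MeasureTheory

lemma count_sup {α : Type*} [DecidableEq α] [Fintype α] (u : Finset α) (r : ℕ)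
    (hur : u.card ≤ r) :
    (Finset.univ.filter (fun S : Finset α => S.card = r ∧ u ⊆ S)).card
      = (Fintype.card α - u.card).choose (r - u.card) := by
  rw [← Finset.card_univ, ← Finset.card_sdiff_of_subset (Finset.subset_univ u),
    ← Finset.card_powersetCard]
  refine Finset.card_bij' (fun S _ => S \ u) (fun T _ => T ∪ u) ?_ ?_ ?_ ?_
  · intro S hS
    simp only [Finset.mem_filter, Finset.mem_univ, true_and] at hS
    rw [Finset.mem_powersetCard]
    exact ⟨Finset.sdiff_subset_sdiff (Finset.subset_univ S) le_rfl,
      by rw [Finset.card_sdiff_of_subset hS.2, hS.1]⟩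
  · intro T hT
    rw [Finset.mem_powersetCard] at hT
    have hd : Disjoint T u := Finset.disjoint_left.2 fun x hx hxu =>
      (Finset.mem_sdiff.1 (hT.1 hx)).2 hxu
    simp only [Finset.mem_filter, Finset.mem_univ, true_and]
    refine ⟨by rw [Finset.card_union_of_disjoint hd, hT.2]; omega,
      Finset.subset_union_right⟩
  · intro S hS
    simp only [Finset.mem_filter, Finset.mem_univ, true_and] at hS
    exact Finset.sdiff_union_of_subset hS.2
  · intro T hT
    rw [Finset.mem_powersetCard] at hT
    exact Finset.union_sdiff_cancel_right (Finset.disjoint_left.2 fun x hx hxu =>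
      (Finset.mem_sdiff.1 (hT.1 hx)).2 hxu)

lemma choose_id1 (n k : ℕ) (h1 : 1 ≤ k) (h2 : k ≤ n) :
    n * (n-1).choose (k-1) = n.choose k * k := by
  have := Nat.add_one_mul_choose_eq (n-1) (k-1)
  have e1 : n - 1 + 1 = n := by omega
  have e2 : k - 1 + 1 = k := by omega
  rwa [e1, e2] at this

lemma choose_id2 (n k : ℕ) (h1 : 2 ≤ k) (h2 : k ≤ n) :
    n * (n-1) * ((n-2).choose (k-2)) = n.choose k * (k * (k-1)) := by
  have A := choose_id1 n k (by omega) h2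
  have B := choose_id1 (n-1) (k-1) (by omega) (by omega)
  have e1 : n - 1 - 1 = n - 2 := by omega
  have e2 : k - 1 - 1 = k - 2 := by omega
  rw [e1, e2] at B
  calc n * (n-1) * ((n-2).choose (k-2)) = n * ((n-1) * (n-2).choose (k-2)) := by ring
    _ = n * ((n-1).choose (k-1) * (k-1)) := by rw [B]
    _ = (n * (n-1).choose (k-1)) * (k-1) := by ring
    _ = n.choose k * k * (k-1) := by rw [A]
    _ = n.choose k * (k * (k-1)) := by ring

lemma sum_ite_card {α : Type*} (s : Finset α) (Q : α → Prop) [DecidablePred Q] (x : ℝ) :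
    ∑ S ∈ s, (if Q S then x else 0) = ((s.filter Q).card : ℝ) * x := by
  rw [← Finset.sum_filter, Finset.sum_const, nsmul_eq_mul]

section
open scoped Classical
variable {n : ℕ}

noncomputable def myμ (W : Finset (Fin n) → ℝ) : @Measure (Finset (Fin n)) ⊤ :=
  ∑ S : Finset (Fin n), ENNReal.ofReal (W S) • @Measure.dirac _ ⊤ S

lemma myμ_apply (W : Finset (Fin n) → ℝ) (hW : ∀ S, 0 ≤ W S) (E : Set (Finset (Fin n))) :
    myμ W E = ENNReal.ofReal (∑ S ∈ Finset.univ.filter (· ∈ E), W S) := by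
  rw [myμ, Measure.finset_sum_apply]
  simp_rw [Measure.smul_apply, @Measure.dirac_apply' _ ⊤ _ _ (MeasurableSpace.measurableSet_top),
    smul_eq_mul]
  rw [Finset.sum_filter, ENNReal.ofReal_sum_of_nonneg
    (fun S _ => by by_cases h : S ∈ E <;> simp [h, hW S])]
  refine Finset.sum_congr rfl fun S _ => ?_
  by_cases h : S ∈ E
  · simp [Set.indicator_of_mem h, h]
  · simp [Set.indicator_of_notMem h, h]

lemma myμ_apply2 (W : Finset (Fin n) → ℝ) (hW : ∀ S, 0 ≤ W S) (E : Set (Finset (Fin n))) :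
    myμ W E = ENNReal.ofReal (∑ S : Finset (Fin n), if S ∈ E then W S else 0) := by
  rw [myμ_apply W hW E, Finset.sum_filter]
end

set_option maxHeartbeats 1000000 in
theorem stmt_12 (n : ℕ) (hn : 2 ≤ n) (p : ℝ) (hp1 : p ≤ 1)
    (hp0 : 1 / ((n : ℝ) - 1) ≤ p) :
    ∃ (Ω : Type) (_ : MeasurableSpace Ω) (μ : Measure Ω) (_ : IsProbabilityMeasure μ)
      (A : Fin n → Set Ω),
      (∀ i, MeasurableSet (A i)) ∧
      (∀ i, μ (A i) = ENNReal.ofReal p) ∧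
      (∀ i j, i ≠ j → μ (A i ∩ A j) = μ (A i) * μ (A j)) ∧
      μ {ω | (∑ i, (A i).indicator (fun _ => (1 : ℕ)) ω) = 1} = 0 := by
  classical
  by_cases hp : p = 1
  · -- trivial construction: all events equal to univ
    refine ⟨PUnit, ⊤, Measure.dirac PUnit.unit, ⟨by simp⟩, fun _ => Set.univ,
      fun _ => MeasurableSet.univ, ?_, ?_, ?_⟩
    · intro i; simp [hp]
    · intro i j _; simp
    · have : {ω : PUnit | (∑ i : Fin n, (Set.univ.indicator (fun _ => (1 : ℕ)) ω)) = 1} = ∅ := by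
        ext ω
        simp only [Set.indicator_univ, Finset.sum_const, Finset.card_univ, Fintype.card_fin,
          smul_eq_mul, mul_one, Set.mem_setOf_eq, Set.mem_empty_iff_false, iff_false]
        omega
      rw [this]; simp
  -- main construction
  have hnr : (3 : ℝ) ≤ (n : ℝ) := by
    by_contra h
    push_neg at h
    have hn2 : n = 2 := by
      have : (n : ℝ) < 3 := h
      have : n < 3 := by exact_mod_cast this
      omega
    rw [hn2] at hp0
    norm_num at hp0
    exact hp (le_antisymm hp1 hp0)
  have hn3 : 3 ≤ n := by exact_mod_cast hnr
  have hplt : p < 1 := lt_of_le_of_ne hp1 hp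
  obtain ⟨nr, hnrdef⟩ : ∃ x : ℝ, x = (n : ℝ) := ⟨_, rfl⟩
  have hnr3 : (3 : ℝ) ≤ nr := by rw [hnrdef]; exact hnr
  have hp0n : 1 / (nr - 1) ≤ p := by rw [hnrdef]; exact hp0
  have hnr1 : (2 : ℝ) ≤ nr - 1 := by linarith
  have hnr1pos : (0 : ℝ) < nr - 1 := by linarith
  obtain ⟨t, htdef⟩ : ∃ x : ℝ, x = (nr - 1) * p := ⟨_, rfl⟩
  have hp0' : 0 < p := lt_of_lt_of_le (by positivity) hp0n
  have ht1 : 1 ≤ t := by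
    rw [htdef]
    rw [div_le_iff₀ hnr1pos] at hp0n
    linarith
  have ht2 : t < nr - 1 := by rw [htdef]; nlinarith
  set k : ℕ := max 2 ⌈t⌉₊ with hkdef
  have hk2 : 2 ≤ k := le_max_left _ _
  have hkn : k + 1 ≤ n := by
    have h1 : ⌈t⌉₊ ≤ n - 1 := by
      rw [Nat.ceil_le]
      have he : ((n - 1 : ℕ) : ℝ) = nr - 1 := by
        rw [hnrdef]; push_cast [Nat.cast_sub (by omega : 1 ≤ n)]; ring
      rw [he]; linarith
    have h2 : 2 ≤ n - 1 := by omega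
    omega
  obtain ⟨kr, hkrdef⟩ : ∃ x : ℝ, x = (k : ℝ) := ⟨_, rfl⟩
  have hkr2 : (2 : ℝ) ≤ kr := by rw [hkrdef]; exact_mod_cast hk2
  have hkrpos : (0 : ℝ) < kr := by linarith
  have hkt : t ≤ kr := by
    rw [hkrdef, hkdef]
    exact le_trans (Nat.le_ceil t) (by exact_mod_cast le_max_right 2 ⌈t⌉₊)
  have hkt' : kr - 1 ≤ t := by
    rcases le_or_gt ⌈t⌉₊ 2 with h | h
    · have hk2' : k = 2 := by rw [hkdef]; exact max_eq_left h
      rw [hkrdef, hk2']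
      norm_num; linarith
    · have hk2' : k = ⌈t⌉₊ := by rw [hkdef]; exact max_eq_right h.le
      rw [hkrdef, hk2']
      have := Nat.ceil_lt_add_one (le_trans zero_le_one ht1)
      linarith
  have hkn' : kr ≤ nr - 1 := by
    have h1 : (k : ℝ) ≤ ((n - 1 : ℕ) : ℝ) := by exact_mod_cast (by omega : k ≤ n - 1)
    have he : ((n - 1 : ℕ) : ℝ) = nr - 1 := by
      rw [hnrdef]; push_cast [Nat.cast_sub (by omega : 1 ≤ n)]; ring
    rw [hkrdef]; linarith [he ▸ h1]
  obtain ⟨a, hadef⟩ : ∃ x : ℝ, x = nr * p - nr * (nr - 1) * p ^ 2 / kr := ⟨_, rfl⟩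
  obtain ⟨b, hbdef⟩ : ∃ x : ℝ, x = (nr * p - kr * a) / (kr + 1) := ⟨_, rfl⟩
  obtain ⟨c, hcdef⟩ : ∃ x : ℝ, x = 1 - a - b := ⟨_, rfl⟩
  have hnrpos : (0 : ℝ) < nr := by linarith
  have hpt : t ≤ kr → True := fun _ => trivial
  have ha'' : kr * a = kr * nr * p - nr * (nr - 1) * p ^ 2 := by
    rw [hadef]; field_simp
  have hb'' : (kr + 1) * b = nr * p - kr * a := by
    rw [hbdef]; field_simp
  have ha : 0 ≤ a := by
    rw [hadef]
    have heq : nr * (nr - 1) * p ^ 2 / kr = nr * p * (t / kr) := by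
      rw [htdef]; field_simp
    rw [heq]
    have h1 : t / kr ≤ 1 := by rw [div_le_one hkrpos]; exact hkt
    nlinarith
  have hI1 : kr * a + (kr + 1) * b = nr * p := by linarith [hb'']
  have hI2 : kr * (kr - 1) * a + (kr + 1) * kr * b = nr * (nr - 1) * p ^ 2 := by
    nlinarith [hb'', ha'']
  have hb : 0 ≤ b := by
    rw [hbdef]
    apply div_nonneg _ (by linarith)
    have heq : nr * p - kr * a = nr * p * (1 - kr + t) := by
      rw [hadef, htdef]; field_simp; ring
    rw [heq]
    nlinarith
  have hc : 0 ≤ c := by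
    rw [hcdef]
    have hab : (nr - 1) * kr * (kr + 1) * (a + b) = nr * t * (2 * kr - t) := by
      rw [htdef]
      linear_combination (nr - 1) * ha'' + (nr - 1) * kr * hb''
    have hpoly : nr * t * (2 * kr - t) ≤ (nr - 1) * kr * (kr + 1) := by
      nlinarith [sq_nonneg (kr - t), mul_nonneg (le_of_lt hkrpos) (by linarith : (0:ℝ) ≤ nr - 1 - kr),
        mul_nonneg (by linarith : (0:ℝ) ≤ nr) (sq_nonneg (kr - t))]
    have hD : (0:ℝ) < (nr - 1) * kr * (kr + 1) := by positivity
    nlinarith [hab, hpoly, hD]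
  -- the combinatorial construction
  have hkn2 : k ≤ n := by omega
  obtain ⟨C1, hC1def⟩ : ∃ x : ℝ, x = (n.choose k : ℝ) := ⟨_, rfl⟩
  obtain ⟨C2, hC2def⟩ : ∃ x : ℝ, x = (n.choose (k+1) : ℝ) := ⟨_, rfl⟩
  have hC1 : 0 < C1 := by rw [hC1def]; exact_mod_cast Nat.choose_pos hkn2
  have hC2 : 0 < C2 := by rw [hC2def]; exact_mod_cast Nat.choose_pos hkn
  set W : Finset (Fin n) → ℝ := fun S =>
    (if S.card = k then a / C1 else 0) + (if S.card = k + 1 then b / C2 else 0) +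
      (if S = ∅ then c else 0) with hWdef
  have hW : ∀ S, 0 ≤ W S := by
    intro S
    rw [hWdef]
    have h1 : 0 ≤ a / C1 := div_nonneg ha hC1.le
    have h2 : 0 ≤ b / C2 := div_nonneg hb hC2.le
    dsimp only
    split_ifs <;> linarith [h1, h2, hc]
  set A : Fin n → Set (Finset (Fin n)) := fun i => {S | i ∈ S} with hAdef
  have main_sum : ∀ (P : Finset (Fin n) → Prop) (_ : DecidablePred P),
      ∑ S ∈ Finset.univ.filter P, W S =
        ((Finset.univ.filter (fun S : Finset (Fin n) => P S ∧ S.card = k)).card : ℝ) * (a/C1)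
        + ((Finset.univ.filter (fun S : Finset (Fin n) => P S ∧ S.card = k+1)).card : ℝ) * (b/C2)
        + ((Finset.univ.filter (fun S : Finset (Fin n) => P S ∧ S = ∅)).card : ℝ) * c := by
    intro P instP
    rw [hWdef]
    rw [Finset.sum_add_distrib, Finset.sum_add_distrib,
      sum_ite_card _ (fun S : Finset (Fin n) => S.card = k) (a/C1),
      sum_ite_card _ (fun S : Finset (Fin n) => S.card = k+1) (b/C2),
      sum_ite_card _ (fun S : Finset (Fin n) => S = ∅) c,
      Finset.filter_filter, Finset.filter_filter, Finset.filter_filter]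
  -- cast choose identities
  have hcastsub : ((n - 1 : ℕ) : ℝ) = nr - 1 := by
    rw [hnrdef]; push_cast [Nat.cast_sub (by omega : 1 ≤ n)]; ring
  have hcastsub2 : ((n - 2 : ℕ) : ℝ) = nr - 2 := by
    rw [hnrdef]; push_cast [Nat.cast_sub (by omega : 2 ≤ n)]; ring
  have hid1 : nr * ((n-1).choose (k-1) : ℝ) = C1 * kr := by
    rw [hnrdef, hkrdef, hC1def]
    exact_mod_cast choose_id1 n k (by omega) hkn2
  have hid2 : nr * ((n-1).choose k : ℝ) = C2 * (kr + 1) := by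
    rw [hnrdef, hkrdef, hC2def]
    have := choose_id1 n (k+1) (by omega) hkn
    simp only [Nat.add_sub_cancel] at this
    exact_mod_cast this
  have hkr1 : kr - 1 = ((k - 1 : ℕ) : ℝ) := by
    rw [hkrdef]; push_cast [Nat.cast_sub (by omega : 1 ≤ k)]; ring
  have hid3 : nr * (nr - 1) * ((n-2).choose (k-2) : ℝ) = C1 * (kr * (kr - 1)) := by
    rw [← hcastsub, hkr1, hnrdef, hkrdef, hC1def]
    exact_mod_cast choose_id2 n k hk2 hkn2
  have hid4 : nr * (nr - 1) * ((n-2).choose (k-1) : ℝ) = C2 * ((kr + 1) * kr) := by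
    rw [← hcastsub, hnrdef, hkrdef, hC2def]
    have := choose_id2 n (k+1) (by omega) hkn
    have e2 : k + 1 - 2 = k - 1 := by omega
    have e3 : k + 1 - 1 = k := by omega
    rw [e2, e3] at this
    exact_mod_cast this
  have conv : ∀ (E : Set (Finset (Fin n))) (q : Finset (Fin n) → Prop)
      (instq : DecidablePred q), (∀ S, S ∈ E ↔ q S) →
      myμ W E = ENNReal.ofReal (∑ S ∈ Finset.univ.filter q, W S) := by
    intro E q instq hEq
    rw [myμ_apply2 W hW, Finset.sum_filter]
    congr 1
    refine Finset.sum_congr rfl fun S _ => ?_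
    by_cases h : q S
    · rw [if_pos h, if_pos ((hEq S).2 h)]
    · rw [if_neg h, if_neg (fun hh => h ((hEq S).1 hh))]
  have hAp : ∀ i : Fin n, myμ W (A i) = ENNReal.ofReal p := by
    intro i
    rw [conv (A i) (fun S => i ∈ S) (fun S => inferInstance) (fun S => Iff.rfl),
      main_sum _ (fun S => inferInstance)]
    have e1 : (Finset.univ.filter (fun S : Finset (Fin n) => i ∈ S ∧ S.card = k)) =
        Finset.univ.filter (fun S : Finset (Fin n) => S.card = k ∧ ({i} : Finset (Fin n)) ⊆ S) := by
      ext S; simp [and_comm]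
    have e2 : (Finset.univ.filter (fun S : Finset (Fin n) => i ∈ S ∧ S.card = k+1)) =
        Finset.univ.filter (fun S : Finset (Fin n) => S.card = k+1 ∧ ({i} : Finset (Fin n)) ⊆ S) := by
      ext S; simp [and_comm]
    have e3 : (Finset.univ.filter (fun S : Finset (Fin n) => i ∈ S ∧ S = ∅)) = ∅ := by
      ext S
      simp only [Finset.mem_filter, Finset.mem_univ, true_and, Finset.notMem_empty, iff_false]
      rintro ⟨h1, rfl⟩
      exact absurd h1 (Finset.notMem_empty i)
    rw [e1, e2, e3, count_sup _ _ (by simp; omega), count_sup _ _ (by simp)]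
    simp only [Finset.card_singleton, Fintype.card_fin, Finset.card_empty, Nat.cast_zero,
      zero_mul, add_zero, Nat.add_sub_cancel]
    congr 1
    have hC1' : C1 ≠ 0 := ne_of_gt hC1
    have hC2' : C2 ≠ 0 := ne_of_gt hC2
    have hnr' : nr ≠ 0 := ne_of_gt hnrpos
    have hD1 : ((n-1).choose (k-1) : ℝ) = C1 * kr / nr := by
      field_simp
      linarith [hid1]
    have hD2 : ((n-1).choose k : ℝ) = C2 * (kr + 1) / nr := by
      field_simp
      linarith [hid2]
    rw [hD1, hD2]
    have hval : C1 * kr / nr * (a / C1) + C2 * (kr + 1) / nr * (b / C2)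
        = (kr * a + (kr + 1) * b) / nr := by field_simp
    rw [hval, hI1, mul_div_cancel_left₀ _ hnr']
  refine ⟨Finset (Fin n), ⊤, myμ W, ?_, A, fun i => trivial, ?_, ?_, ?_⟩
  · -- probability measure
    constructor
    rw [conv Set.univ (fun _ => True) (fun _ => instDecidableTrue) (fun S => by simp),
      main_sum _ (fun _ => instDecidableTrue)]
    have e1 : (Finset.univ.filter (fun S : Finset (Fin n) => True ∧ S.card = k)) =
        Finset.univ.filter (fun S : Finset (Fin n) => S.card = k ∧ (∅ : Finset (Fin n)) ⊆ S) := by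
      ext S; simp
    have e2 : (Finset.univ.filter (fun S : Finset (Fin n) => True ∧ S.card = k+1)) =
        Finset.univ.filter (fun S : Finset (Fin n) => S.card = k+1 ∧ (∅ : Finset (Fin n)) ⊆ S) := by
      ext S; simp
    have e3 : (Finset.univ.filter (fun S : Finset (Fin n) => True ∧ S = ∅)) = {∅} := by
      ext S; simp
    rw [e1, e2, e3, count_sup _ _ (by simp), count_sup _ _ (by simp)]
    simp only [Finset.card_empty, Nat.sub_zero, Fintype.card_fin, Finset.card_singleton,
      Nat.cast_one, one_mul]
    rw [← hC1def, ← hC2def, mul_div_cancel₀ _ (ne_of_gt hC1), mul_div_cancel₀ _ (ne_of_gt hC2)]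
    have : a + b + c = 1 := by rw [hcdef]; ring
    rw [this, ENNReal.ofReal_one]
  · exact hAp
  · -- pairwise independence
    intro i j hij
    have hmem : ∀ S : Finset (Fin n), S ∈ A i ∩ A j ↔ i ∈ S ∧ j ∈ S := by
      intro S; rw [hAdef]; simp [Set.mem_inter_iff]
    rw [conv (A i ∩ A j) (fun S => i ∈ S ∧ j ∈ S) (fun S => inferInstance) hmem,
      main_sum _ (fun S => inferInstance)]
    have hij2 : ({i, j} : Finset (Fin n)).card = 2 := Finset.card_pair hij
    have e1 : (Finset.univ.filter (fun S : Finset (Fin n) => (i ∈ S ∧ j ∈ S) ∧ S.card = k)) =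
        Finset.univ.filter (fun S : Finset (Fin n) => S.card = k ∧ ({i, j} : Finset (Fin n)) ⊆ S) := by
      ext S; simp [Finset.insert_subset_iff, and_comm]
    have e2 : (Finset.univ.filter (fun S : Finset (Fin n) => (i ∈ S ∧ j ∈ S) ∧ S.card = k+1)) =
        Finset.univ.filter (fun S : Finset (Fin n) => S.card = k+1 ∧ ({i, j} : Finset (Fin n)) ⊆ S) := by
      ext S; simp [Finset.insert_subset_iff, and_comm]
    have e3 : (Finset.univ.filter (fun S : Finset (Fin n) => (i ∈ S ∧ j ∈ S) ∧ S = ∅)) = ∅ := by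
      ext S
      simp only [Finset.mem_filter, Finset.mem_univ, true_and, Finset.notMem_empty, iff_false]
      rintro ⟨⟨h1, _⟩, rfl⟩
      exact absurd h1 (Finset.notMem_empty i)
    rw [e1, e2, e3, count_sup _ _ (by rw [hij2]; omega), count_sup _ _ (by rw [hij2]; omega)]
    rw [hij2]
    simp only [Fintype.card_fin, Finset.card_empty, Nat.cast_zero, zero_mul, add_zero]
    -- now pure arithmetic
    rw [hAp i, hAp j, ← ENNReal.ofReal_mul hp0'.le]
    congr 1
    have hC1' : C1 ≠ 0 := ne_of_gt hC1
    have hC2' : C2 ≠ 0 := ne_of_gt hC2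
    have hN' : nr * (nr - 1) ≠ 0 := by positivity
    have hE1 : ((n-2).choose (k-2) : ℝ) = C1 * (kr * (kr - 1)) / (nr * (nr - 1)) := by
      field_simp
      linarith [hid3]
    have hE2 : ((n-2).choose (k-1) : ℝ) = C2 * ((kr + 1) * kr) / (nr * (nr - 1)) := by
      field_simp
      linarith [hid4]
    simp only [show k + 1 - 2 = k - 1 from by omega]
    rw [hE1, hE2]
    have hval : C1 * (kr * (kr - 1)) / (nr * (nr - 1)) * (a / C1)
        + C2 * ((kr + 1) * kr) / (nr * (nr - 1)) * (b / C2)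
        = (kr * (kr - 1) * a + (kr + 1) * kr * b) / (nr * (nr - 1)) := by
      field_simp
    rw [hval, hI2]
    rw [div_eq_iff hN']
    ring
  · -- the count-one event is null
    have hev : {ω : Finset (Fin n) | (∑ i, (A i).indicator (fun _ => (1 : ℕ)) ω) = 1} =
        {S : Finset (Fin n) | S.card = 1} := by
      ext S
      simp only [Set.mem_setOf_eq]
      have hterm : ∀ i : Fin n, (A i).indicator (fun _ => (1 : ℕ)) S = if i ∈ S then 1 else 0 := by
        intro i
        by_cases h : i ∈ S
        · rw [Set.indicator_of_mem (by rw [hAdef]; exact h), if_pos h]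
        · rw [Set.indicator_of_notMem (by rw [hAdef]; exact h), if_neg h]
      rw [Finset.sum_congr rfl (fun i _ => hterm i), Finset.sum_ite_mem, Finset.univ_inter,
        Finset.sum_const, smul_eq_mul, mul_one]
    rw [hev, conv {S : Finset (Fin n) | S.card = 1} (fun S => S.card = 1) (fun S => inferInstance) (fun S => Iff.rfl)]
    have : ∑ S ∈ Finset.univ.filter (fun S : Finset (Fin n) => S.card = 1), W S = 0 := by
      apply Finset.sum_eq_zero
      intro S hS
      rw [Finset.mem_filter] at hS
      rw [hWdef]
      have h1 : ¬ (S.card = k) := by omega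
      have h2 : ¬ (S.card = k + 1) := by omega
      have h3 : ¬ (S = ∅) := by
        intro h; rw [h] at hS; simp at hS
      dsimp only
      rw [if_neg h1, if_neg h2, if_neg h3]
      ring
    rw [this, ENNReal.ofReal_zero]
end

section
/- If A_1, ..., A_n are pairwise independent events each of probability p, then the probability that exactly n−1 of them occur is at least n·(1−p)·max(0, 1 − (n−1)(1−p)), and this bound is attained for every n ≥ 2 and p ∈ [0,1]. -/
open MeasureTheory

lemma lb_aux (n : ℕ) (hn : 2 ≤ n) (p : ℝ) (hp0 : 0 ≤ p) (hp1 : p ≤ 1)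
    (Ω : Type) [MeasurableSpace Ω] (μ : Measure Ω) (hμ : IsProbabilityMeasure μ)
    (A : Fin n → Set Ω) (hmeas : ∀ i, MeasurableSet (A i))
    (h1 : ∀ i, μ (A i) = ENNReal.ofReal p)
    (h2 : ∀ i j, i ≠ j → μ (A i ∩ A j) = ENNReal.ofReal (p ^ 2)) :
    ENNReal.ofReal ((n : ℝ) * (1 - p) * max 0 (1 - ((n : ℝ) - 1) * (1 - p))) ≤
      μ {ω | (∑ i, (A i).indicator (fun _ => (1 : ℕ)) ω) = n - 1} := by
  rcases le_or_gt (1 - ((n : ℝ) - 1) * (1 - p)) 0 with h | h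
  · rw [max_eq_left h, mul_zero, ENNReal.ofReal_zero]
    exact zero_le
  rw [max_eq_right h.le]
  -- the events B i : exactly A i fails
  set B : Fin n → Set Ω := fun i => (A i)ᶜ ∩ ⋂ j ∈ Finset.univ.erase i, A j with hB
  have hBmeas : ∀ i, MeasurableSet (B i) :=
    fun i => (hmeas i).compl.inter (Finset.measurableSet_biInter _ fun j _ => hmeas j)
  have hdisj : Pairwise (Function.onFun Disjoint B) := by
    intro i j hij
    refine Set.disjoint_left.2 fun ω hωi hωj => ?_
    have hji : j ∈ Finset.univ.erase i := Finset.mem_erase.2 ⟨hij.symm, Finset.mem_univ j⟩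
    exact hωj.1 (Set.mem_iInter₂.1 hωi.2 j hji)
  have hsub : (⋃ i, B i) ⊆ {ω | (∑ i, (A i).indicator (fun _ => (1 : ℕ)) ω) = n - 1} := by
    rintro ω ⟨_, ⟨i, rfl⟩, hωi⟩
    have h0 : (A i).indicator (fun _ => (1 : ℕ)) ω = 0 := Set.indicator_of_notMem hωi.1 _
    have hsum : ∑ j ∈ Finset.univ.erase i, (A j).indicator (fun _ => (1 : ℕ)) ω = n - 1 := by
      rw [Finset.sum_congr rfl (fun j hj => Set.indicator_of_mem (Set.mem_iInter₂.1 hωi.2 j hj) _)]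
      simp [Finset.card_erase_of_mem]
    have := Finset.sum_erase_add Finset.univ (fun j => (A j).indicator (fun _ => (1 : ℕ)) ω)
      (Finset.mem_univ i)
    simp only [Set.mem_setOf_eq]
    rw [← this]
    rw [h0, add_zero, hsum]
  -- pairwise complement intersections
  have hpair : ∀ i j, i ≠ j → μ ((A i)ᶜ ∩ (A j)ᶜ) = ENNReal.ofReal ((1 - p) ^ 2) := by
    intro i j hij
    have hu : μ (A i ∪ A j) = ENNReal.ofReal (2 * p - p ^ 2) := by
      have key := measure_union_add_inter (μ := μ) (A i) (hmeas j)
      rw [h1 i, h1 j, h2 i j hij] at key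
      have := ENNReal.eq_sub_of_add_eq ENNReal.ofReal_ne_top key
      rw [this, ← ENNReal.ofReal_add hp0 hp0, ← ENNReal.ofReal_sub _ (by positivity)]
      congr 1; ring
    rw [← Set.compl_union, prob_compl_eq_one_sub ((hmeas i).union (hmeas j)), hu,
      ← ENNReal.ofReal_one, ← ENNReal.ofReal_sub _ (by nlinarith)]
    congr 1; ring
  have hAc : ∀ i, μ ((A i)ᶜ) = ENNReal.ofReal (1 - p) := by
    intro i
    rw [prob_compl_eq_one_sub (hmeas i), h1 i, ← ENNReal.ofReal_one,
      ← ENNReal.ofReal_sub _ hp0]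
  -- lower bound for each B i
  have hn1 : (0:ℝ) ≤ (n : ℝ) - 1 := by
    have h2n : (2:ℝ) ≤ (n:ℝ) := by exact_mod_cast hn
    linarith
  have hnn : (0:ℝ) ≤ ((n : ℝ) - 1) * (1 - p) ^ 2 := mul_nonneg hn1 (by positivity)
  have hBi : ∀ i, ENNReal.ofReal ((1 - p) - ((n : ℝ) - 1) * (1 - p) ^ 2) ≤ μ (B i) := by
    intro i
    have hBeq : B i = (A i)ᶜ \ ⋃ j ∈ Finset.univ.erase i, ((A i)ᶜ ∩ (A j)ᶜ) := by
      ext ω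
      simp only [hB, Set.mem_inter_iff, Set.mem_compl_iff, Set.mem_iInter, Set.mem_diff,
        Set.mem_iUnion, not_exists]
      constructor
      · rintro ⟨h1', h2'⟩; exact ⟨h1', fun j hj => fun hc => hc.2 (h2' j hj)⟩
      · rintro ⟨h1', h2'⟩
        refine ⟨h1', fun j hj => ?_⟩
        by_contra hc
        exact h2' j hj ⟨h1', hc⟩
    have hU : μ (⋃ j ∈ Finset.univ.erase i, ((A i)ᶜ ∩ (A j)ᶜ)) ≤
        ENNReal.ofReal (((n : ℝ) - 1) * (1 - p) ^ 2) := by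
      refine le_trans (measure_biUnion_finset_le _ _) ?_
      have : ∀ j ∈ Finset.univ.erase i, μ ((A i)ᶜ ∩ (A j)ᶜ) = ENNReal.ofReal ((1 - p) ^ 2) :=
        fun j hj => hpair i j (Finset.mem_erase.1 hj).1.symm
      rw [Finset.sum_congr rfl this, Finset.sum_const, Finset.card_erase_of_mem (Finset.mem_univ i),
        Finset.card_univ, Fintype.card_fin, nsmul_eq_mul, ← ENNReal.ofReal_natCast,
        ← ENNReal.ofReal_mul (by positivity)]
      rw [ENNReal.ofReal_le_ofReal_iff hnn]
      have hc : ((n - 1 : ℕ) : ℝ) = (n : ℝ) - 1 := by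
        have : (1 : ℕ) ≤ n := by omega
        push_cast [this]; ring
      rw [hc]
    calc ENNReal.ofReal ((1 - p) - ((n : ℝ) - 1) * (1 - p) ^ 2)
        = ENNReal.ofReal (1 - p) - ENNReal.ofReal (((n : ℝ) - 1) * (1 - p) ^ 2) :=
          ENNReal.ofReal_sub _ hnn
      _ ≤ μ ((A i)ᶜ) - μ (⋃ j ∈ Finset.univ.erase i, ((A i)ᶜ ∩ (A j)ᶜ)) := by
          exact tsub_le_tsub (hAc i).ge hU
      _ ≤ μ ((A i)ᶜ \ ⋃ j ∈ Finset.univ.erase i, ((A i)ᶜ ∩ (A j)ᶜ)) := le_measure_diff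
      _ = μ (B i) := by rw [← hBeq]
  calc ENNReal.ofReal ((n : ℝ) * (1 - p) * (1 - ((n : ℝ) - 1) * (1 - p)))
      = ∑ i : Fin n, ENNReal.ofReal ((1 - p) - ((n : ℝ) - 1) * (1 - p) ^ 2) := by
        rw [Finset.sum_const, Finset.card_univ, Fintype.card_fin, nsmul_eq_mul,
          ← ENNReal.ofReal_natCast, ← ENNReal.ofReal_mul (by positivity)]
        congr 1; ring
    _ ≤ ∑ i : Fin n, μ (B i) := Finset.sum_le_sum fun i _ => hBi i
    _ = μ (⋃ i, B i) := by rw [measure_iUnion hdisj hBmeas, tsum_fintype]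
    _ ≤ μ {ω | (∑ i, (A i).indicator (fun _ => (1 : ℕ)) ω) = n - 1} := measure_mono hsub


lemma nat_choose_id (n t : ℕ) (hn : 1 ≤ n) : n * (n-1).choose t = n.choose t * (n - t) := by
  obtain ⟨m, rfl⟩ : ∃ m, n = m + 1 := ⟨n - 1, by omega⟩
  simp only [Nat.add_sub_cancel]
  rw [Nat.add_one_mul_choose_eq m t, Nat.choose_succ_right_eq (m+1) t]


lemma alg1 (N K K2 q p CK CK1 m u b c a : ℝ)
    (hN : N ≠ 0) (hK : K ≠ 0) (hK1 : K + 1 ≠ 0) (hCK : CK ≠ 0) (hCK1 : CK1 ≠ 0)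
    (hK2 : K2 = K + 1) (hu : u = (N-1)*q) (hm : m = N*q) (hb : b = m*(K-u)/K)
    (hc : c = m*(u+1-K)/(K+1)) (ha : a = 1-b-c) (hp : p = 1 - q) :
    a + CK * (N - K) / N * (b / CK) + CK1 * (N - K2) / N * (c / CK1) = p := by
  subst hK2 hu hm hb hc ha hp
  field_simp
  try ring

lemma alg2 (N K K2 q p CK CK1 m u b c a : ℝ)
    (hN : N ≠ 0) (hN1 : N - 1 ≠ 0) (hK : K ≠ 0) (hK1 : K + 1 ≠ 0)
    (hCK : CK ≠ 0) (hCK1 : CK1 ≠ 0)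
    (hK2 : K2 = K + 1) (hu : u = (N-1)*q) (hm : m = N*q) (hb : b = m*(K-u)/K)
    (hc : c = m*(u+1-K)/(K+1)) (ha : a = 1-b-c) (hp : p = 1 - q) :
    a + CK * (N - K) / N * (N - 1 - K) / (N - 1) * (b / CK)
      + CK1 * (N - K2) / N * (N - 1 - K2) / (N - 1) * (c / CK1) = p ^ 2 := by
  subst hK2 hu hm hb hc ha hp
  field_simp
  try ring

lemma alg3 (N K q u m b p : ℝ) (hN : N ≠ 0) (hK : K = 1) (hm : m = N*q)
    (hu : u = (N-1)*q) (hb : b = m*(K-u)/K) (hq : q = 1-p) :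
    N * (b / N) = N * (1-p) * (1-u) := by
  subst hK hm hb hu hq
  field_simp
  try ring

lemma constr (n : ℕ) (hn : 2 ≤ n) (p : ℝ) (hp0 : 0 ≤ p) (hp1 : p ≤ 1) :
    ∃ (Ω : Type) (_ : MeasurableSpace Ω) (μ : Measure Ω) (_ : IsProbabilityMeasure μ)
      (A : Fin n → Set Ω),
      (∀ i, MeasurableSet (A i)) ∧
      (∀ i, μ (A i) = ENNReal.ofReal p) ∧
      (∀ i j, i ≠ j → μ (A i ∩ A j) = ENNReal.ofReal (p ^ 2)) ∧
      μ {ω | (∑ i, (A i).indicator (fun _ => (1 : ℕ)) ω) = n - 1} =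
        ENNReal.ofReal ((n : ℝ) * (1 - p) * max 0 (1 - ((n : ℝ) - 1) * (1 - p))) := by
  classical
  have hN2 : (2:ℝ) ≤ (n:ℝ) := by exact_mod_cast hn
  set q : ℝ := 1 - p with hq_def
  have hq0 : 0 ≤ q := by simp [hq_def]; linarith
  have hq1 : q ≤ 1 := by simp [hq_def]; linarith
  clear_value q
  set u : ℝ := ((n:ℝ) - 1) * q with hu_def
  have hu0 : 0 ≤ u := mul_nonneg (by linarith) hq0
  set k : ℕ := max 1 ⌈u⌉₊ with hk_def
  have hk1 : 1 ≤ k := le_max_left _ _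
  have hkn : k ≤ n - 1 := by
    have h1 : ⌈u⌉₊ ≤ n - 1 := by
      rw [Nat.ceil_le]
      have : ((n - 1 : ℕ) : ℝ) = (n:ℝ) - 1 := by
        have : (1:ℕ) ≤ n := by omega
        push_cast [this]; ring
      rw [this, hu_def]; nlinarith
    omega
  have hKu : u ≤ (k:ℝ) := le_trans (Nat.le_ceil u) (by exact_mod_cast Nat.cast_le.2 (le_max_right 1 ⌈u⌉₊))
  have hK1u : (k:ℝ) - 1 ≤ u := by
    rcases Nat.lt_or_ge ⌈u⌉₊ 2 with hc | hc
    · have hk' : k = 1 := by omega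
      rw [hk']; push_cast; linarith
    · have hk' : k = ⌈u⌉₊ := by omega
      have h2 := Nat.ceil_lt_add_one hu0
      rw [hk']
      have : (⌈u⌉₊ : ℝ) < u + 1 := by exact_mod_cast h2
      linarith
  clear_value k
  clear_value u
  set K : ℝ := (k:ℝ) with hK_def
  have hK0 : (0:ℝ) < K := by
    rw [hK_def]; exact_mod_cast Nat.lt_of_lt_of_le Nat.zero_lt_one hk1
  have hKN : K ≤ (n:ℝ) - 1 := by
    rw [hK_def]
    have : ((k:ℕ):ℝ) ≤ ((n-1:ℕ):ℝ) := Nat.cast_le.2 hkn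
    have h2 : ((n - 1 : ℕ) : ℝ) = (n:ℝ) - 1 := by
      have : (1:ℕ) ≤ n := by omega
      push_cast [this]; ring
    linarith [h2 ▸ this]
  clear_value K
  set m : ℝ := (n:ℝ) * q with hm_def
  have hm0 : 0 ≤ m := mul_nonneg (by linarith) hq0
  clear_value m
  set b : ℝ := m * (K - u) / K with hb_def
  clear_value b
  set c : ℝ := m * (u + 1 - K) / (K + 1) with hc_def
  clear_value c
  set a : ℝ := 1 - b - c with ha_def
  clear_value a
  have hb0 : 0 ≤ b := by
    rw [hb_def]; exact div_nonneg (mul_nonneg hm0 (by linarith)) hK0.le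
  have hc0 : 0 ≤ c := by
    rw [hc_def]; exact div_nonneg (mul_nonneg hm0 (by linarith)) (by linarith)
  have hmu : m = (n:ℝ) * q := hm_def
  have ha0 : 0 ≤ a := by
    have hbc : b + c = m * (2*K - u) / (K * (K+1)) := by
      rw [hb_def, hc_def]; field_simp; ring
    have key : m * (2*K - u) ≤ K * (K + 1) := by
      have h1 : 0 ≤ K * ((n:ℝ) - 1 - K) := mul_nonneg hK0.le (by linarith)
      have h2 : 0 ≤ (n:ℝ) * (K - u)^2 := mul_nonneg (by linarith) (sq_nonneg _)
      nlinarith [hu_def, hm_def]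
    have : b + c ≤ 1 := by
      rw [hbc, div_le_one (by positivity)]; exact key
    rw [ha_def]; linarith
  -- the chosen weights
  set v : ℕ → ℝ := fun t => if t = 0 then a else if t = k then b / (n.choose k)
      else if t = k + 1 then c / (n.choose (k+1)) else 0 with hv_def
  letI : MeasurableSpace (Finset (Fin n)) := ⊤
  set μ : Measure (Finset (Fin n)) :=
    ∑ S ∈ Finset.univ, ENNReal.ofReal (v S.card) • Measure.dirac S with hμ_def
  have happ : ∀ E : Set (Finset (Fin n)),
      μ E = ∑ S ∈ Finset.univ.filter (· ∈ E), ENNReal.ofReal (v S.card) := by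
    intro E
    rw [hμ_def, Measure.finset_sum_apply, Finset.sum_filter]
    refine Finset.sum_congr rfl fun S _ => ?_
    rw [Measure.smul_apply, Measure.dirac_apply' _ MeasurableSpace.measurableSet_top]
    by_cases hS : S ∈ E
    · simp [Set.indicator_of_mem hS, hS]
    · simp [Set.indicator_of_notMem hS, hS]
  have hcount : ∀ (X : Finset (Fin n)) (t : ℕ),
      (Finset.univ.filter fun S : Finset (Fin n) => S ⊆ X ∧ S.card = t).card = X.card.choose t := by
    intro X t
    rw [show (Finset.univ.filter fun S : Finset (Fin n) => S ⊆ X ∧ S.card = t)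
        = Finset.powersetCard t X from by ext S; simp [Finset.mem_powersetCard]]
    exact Finset.card_powersetCard t X
  have hsplit : ∀ T : Finset (Finset (Fin n)),
      ∑ S ∈ T, ENNReal.ofReal (v S.card) =
        (T.filter fun S => S.card = 0).card • ENNReal.ofReal a
        + (T.filter fun S => S.card = k).card • ENNReal.ofReal (b / (n.choose k))
        + (T.filter fun S => S.card = k + 1).card • ENNReal.ofReal (c / (n.choose (k+1))) := by
    intro T
    have hv : ∀ S ∈ T, ENNReal.ofReal (v S.card) =
        (if S.card = 0 then ENNReal.ofReal a else 0)
        + (if S.card = k then ENNReal.ofReal (b / (n.choose k)) else 0)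
        + (if S.card = k + 1 then ENNReal.ofReal (c / (n.choose (k+1))) else 0) := by
      intro S _
      have hk0 : k ≠ 0 := by omega
      simp only [hv_def]
      split_ifs <;> first | omega | simp
    rw [Finset.sum_congr rfl hv, Finset.sum_add_distrib, Finset.sum_add_distrib,
      ← Finset.sum_filter, ← Finset.sum_filter, ← Finset.sum_filter,
      Finset.sum_const, Finset.sum_const, Finset.sum_const]
  have hCk : (0:ℝ) < (n.choose k : ℝ) := by exact_mod_cast Nat.choose_pos (by omega : k ≤ n)
  have hCk1 : (0:ℝ) < (n.choose (k+1) : ℝ) := by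
    exact_mod_cast Nat.choose_pos (by omega : k + 1 ≤ n)
  have hconv : ∀ (M : ℕ) (x : ℝ), 0 ≤ x → M • ENNReal.ofReal x = ENNReal.ofReal (M * x) := by
    intro M x hx
    rw [nsmul_eq_mul, ← ENNReal.ofReal_natCast M, ← ENNReal.ofReal_mul (Nat.cast_nonneg M)]
  set A : Fin n → Set (Finset (Fin n)) := fun i => {S | i ∉ S} with hA_def
  have heval : ∀ E : Set (Finset (Fin n)),
      μ E = ENNReal.ofReal (
        ((Finset.univ.filter fun S : Finset (Fin n) => S ∈ E ∧ S.card = 0).card : ℝ) * a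
        + ((Finset.univ.filter fun S : Finset (Fin n) => S ∈ E ∧ S.card = k).card : ℝ)
            * (b / (n.choose k))
        + ((Finset.univ.filter fun S : Finset (Fin n) => S ∈ E ∧ S.card = k+1).card : ℝ)
            * (c / (n.choose (k+1)))) := by
    intro E
    rw [happ E, hsplit, Finset.filter_filter, Finset.filter_filter, Finset.filter_filter,
      hconv _ _ ha0, hconv _ _ (div_nonneg hb0 hCk.le), hconv _ _ (div_nonneg hc0 hCk1.le),
      ← ENNReal.ofReal_add (mul_nonneg (Nat.cast_nonneg _) ha0)
        (mul_nonneg (Nat.cast_nonneg _) (div_nonneg hb0 hCk.le)),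
      ← ENNReal.ofReal_add (by positivity)
        (mul_nonneg (Nat.cast_nonneg _) (div_nonneg hc0 hCk1.le))]
  -- counting lemmas
  have hcuniv : ∀ (t : ℕ) (inst : DecidablePred fun S : Finset (Fin n) =>
      S ∈ (Set.univ : Set (Finset (Fin n))) ∧ S.card = t),
      (@Finset.filter _ _ inst Finset.univ).card = n.choose t := by
    intro t inst
    rw [show (@Finset.filter _ _ inst Finset.univ) = Finset.powersetCard t Finset.univ
      from by ext S; simp [Finset.mem_powersetCard]]
    simp [Finset.card_powersetCard]
  have hcA : ∀ (i : Fin n) (t : ℕ) (inst : DecidablePred fun S : Finset (Fin n) =>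
      S ∈ A i ∧ S.card = t),
      (@Finset.filter _ _ inst Finset.univ).card = (n-1).choose t := by
    intro i t inst
    rw [show (@Finset.filter _ _ inst Finset.univ)
        = Finset.powersetCard t (Finset.univ.erase i) from by
      ext S
      simp [Finset.mem_powersetCard, Finset.subset_erase, hA_def]]
    rw [Finset.card_powersetCard, Finset.card_erase_of_mem (Finset.mem_univ i), Finset.card_fin]
  have hcAA : ∀ (i j : Fin n), i ≠ j → ∀ (t : ℕ)
      (inst : DecidablePred fun S : Finset (Fin n) => S ∈ A i ∩ A j ∧ S.card = t),
      (@Finset.filter _ _ inst Finset.univ).card = (n-2).choose t := by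
    intro i j hij t inst
    rw [show (@Finset.filter _ _ inst Finset.univ)
        = Finset.powersetCard t ((Finset.univ.erase i).erase j) from by
      ext S
      simp only [Finset.mem_filter, Finset.mem_univ, true_and, Finset.mem_powersetCard,
        Finset.subset_erase, hA_def, Set.mem_inter_iff, Set.mem_setOf_eq]
      constructor
      · rintro ⟨⟨h1, h2⟩, h3⟩
        exact ⟨⟨⟨Finset.subset_univ S, h1⟩, h2⟩, h3⟩
      · rintro ⟨⟨⟨_, h1⟩, h2⟩, h3⟩
        exact ⟨⟨h1, h2⟩, h3⟩]
    rw [Finset.card_powersetCard,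
      Finset.card_erase_of_mem (Finset.mem_erase.2 ⟨hij.symm, Finset.mem_univ j⟩),
      Finset.card_erase_of_mem (Finset.mem_univ i), Finset.card_fin,
      show n - 1 - 1 = n - 2 from by omega]
  -- nonzeroness
  have hNe : (n:ℝ) ≠ 0 := by positivity
  have hN1e : (n:ℝ) - 1 ≠ 0 := by
    have : (2:ℝ) ≤ (n:ℝ) := hN2
    intro hcon; linarith
  have hKe : K ≠ 0 := ne_of_gt hK0
  have hK1e : K + 1 ≠ 0 := by intro hcon; linarith
  have hCke : (n.choose k : ℝ) ≠ 0 := ne_of_gt hCk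
  have hCk1e : (n.choose (k+1) : ℝ) ≠ 0 := ne_of_gt hCk1
  -- ratio identities
  have hrk : ∀ t : ℕ, t ≤ n → ((n-1).choose t : ℝ) = (n.choose t : ℝ) * ((n:ℝ) - t) / n := by
    intro t ht
    have h0 := nat_choose_id n t (by omega)
    have h1 : ((n * (n-1).choose t : ℕ) : ℝ) = ((n.choose t * (n - t) : ℕ) : ℝ) := by
      exact_mod_cast congrArg (Nat.cast : ℕ → ℝ) h0
    push_cast [ht] at h1
    rw [eq_div_iff hNe]
    linarith [h1]
  have hr2 : ∀ t : ℕ, t ≤ n →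
      ((n-2).choose t : ℝ) = ((n-1).choose t : ℝ) * ((n:ℝ) - 1 - t) / ((n:ℝ) - 1) := by
    intro t ht
    rcases Nat.lt_or_ge t n with ht' | ht'
    · have ht2 : t ≤ n - 1 := by omega
      have h0 := nat_choose_id (n-1) t (by omega)
      have e1 : (n-1)-1 = n-2 := by omega
      rw [e1] at h0
      have h1 : (((n-1) * (n-2).choose t : ℕ) : ℝ) = (((n-1).choose t * ((n-1) - t) : ℕ) : ℝ) := by
        exact_mod_cast congrArg (Nat.cast : ℕ → ℝ) h0
      push_cast [ht2, (by omega : 1 ≤ n)] at h1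
      rw [eq_div_iff hN1e]
      linarith [h1]
    · have htn : t = n := by omega
      subst htn
      rw [Nat.choose_eq_zero_of_lt (by omega), Nat.choose_eq_zero_of_lt (by omega)]
      simp
  -- total mass
  have hprob : IsProbabilityMeasure μ := by
    constructor
    rw [heval Set.univ, hcuniv 0 _, hcuniv k _, hcuniv (k+1) _]
    rw [show ((n.choose 0 : ℝ) * a + (n.choose k : ℝ) * (b / (n.choose k : ℝ))
        + (n.choose (k+1) : ℝ) * (c / (n.choose (k+1) : ℝ))) = (1:ℝ) from by
      rw [Nat.choose_zero_right, Nat.cast_one, one_mul,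
        mul_div_cancel₀ _ hCke, mul_div_cancel₀ _ hCk1e, ha_def]
      ring]
    exact ENNReal.ofReal_one
  -- measure of A i
  have hμA : ∀ i, μ (A i) = ENNReal.ofReal p := by
    intro i
    rw [heval (A i), hcA i 0 _, hcA i k _, hcA i (k+1) _]
    congr 1
    rw [Nat.choose_zero_right, Nat.cast_one, one_mul, hrk k (by omega), hrk (k+1) (by omega),
      ← hK_def]
    exact alg1 _ K _ _ p _ _ m u b c a hNe hKe hK1e hCke hCk1e
      (by rw [hK_def]; push_cast; ring) hu_def hm_def hb_def hc_def ha_def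
      (by rw [hq_def]; ring)
  -- measure of pairwise intersections
  have hμAA : ∀ i j, i ≠ j → μ (A i ∩ A j) = ENNReal.ofReal (p^2) := by
    intro i j hij
    rw [heval (A i ∩ A j), hcAA i j hij 0 _, hcAA i j hij k _, hcAA i j hij (k+1) _]
    congr 1
    rw [Nat.choose_zero_right, Nat.cast_one, one_mul, hr2 k (by omega), hr2 (k+1) (by omega),
      hrk k (by omega), hrk (k+1) (by omega), ← hK_def]
    exact alg2 _ K _ _ p _ _ m u b c a hNe hN1e hKe hK1e hCke hCk1e
      (by rw [hK_def]; push_cast; ring) hu_def hm_def hb_def hc_def ha_def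
      (by rw [hq_def]; ring)
  -- identification of the event
  have hset : {ω : Finset (Fin n) | (∑ i, (A i).indicator (fun _ => (1:ℕ)) ω) = n - 1}
      = {S : Finset (Fin n) | S.card = 1} := by
    ext S
    have hind : ∀ i : Fin n, (A i).indicator (fun _ => (1:ℕ)) S = if i ∈ S then 0 else 1 := by
      intro i
      by_cases h : i ∈ S
      · rw [if_pos h, Set.indicator_of_notMem (by simp [hA_def, h])]
      · rw [if_neg h, Set.indicator_of_mem (by simp [hA_def, h])]
    have hsum : (∑ i, (A i).indicator (fun _ => (1:ℕ)) S) = n - S.card := by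
      rw [Finset.sum_congr rfl fun i _ => hind i, Finset.sum_ite, Finset.sum_const,
        Finset.sum_const]
      simp only [smul_eq_mul, mul_zero, mul_one, zero_add]
      rw [show Finset.univ.filter (fun i => ¬ i ∈ S) = Sᶜ from by ext x; simp,
        Finset.card_compl, Fintype.card_fin]
    have hle : S.card ≤ n := by simpa using Finset.card_le_univ S
    simp only [Set.mem_setOf_eq, hsum]
    omega
  -- the measure of the event {card = 1}
  have hc0' : ∀ (inst : DecidablePred fun S : Finset (Fin n) =>
      S ∈ {S : Finset (Fin n) | S.card = 1} ∧ S.card = 0),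
      (@Finset.filter _ _ inst Finset.univ).card = 0 := by
    intro inst
    rw [Finset.card_eq_zero, Finset.eq_empty_iff_forall_notMem]
    intro S hS
    simp only [Finset.mem_filter, Set.mem_setOf_eq] at hS
    omega
  have hck1' : ∀ (inst : DecidablePred fun S : Finset (Fin n) =>
      S ∈ {S : Finset (Fin n) | S.card = 1} ∧ S.card = k+1),
      (@Finset.filter _ _ inst Finset.univ).card = 0 := by
    intro inst
    rw [Finset.card_eq_zero, Finset.eq_empty_iff_forall_notMem]
    intro S hS
    simp only [Finset.mem_filter, Set.mem_setOf_eq] at hS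
    omega
  have hu_eq : ((n:ℝ) - 1) * (1 - p) = u := by rw [hu_def, hq_def]
  have hfinal : μ {S : Finset (Fin n) | S.card = 1}
      = ENNReal.ofReal ((n:ℝ) * (1 - p) * max 0 (1 - ((n:ℝ) - 1) * (1 - p))) := by
    rcases Nat.lt_or_ge k 2 with h2 | h2
    · -- k = 1
      have hk1' : k = 1 := by omega
      have hK1 : K = 1 := by rw [hK_def, hk1']; norm_num
      have hckk : ∀ (inst : DecidablePred fun S : Finset (Fin n) =>
          S ∈ {S : Finset (Fin n) | S.card = 1} ∧ S.card = k),
          (@Finset.filter _ _ inst Finset.univ).card = n := by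
        intro inst
        rw [show (@Finset.filter _ _ inst Finset.univ)
          = Finset.powersetCard 1 Finset.univ from by
            ext S; simp [Finset.mem_powersetCard, hk1']]
        simp [Finset.card_powersetCard]
      rw [heval, hc0' _, hckk _, hck1' _]
      rw [show (1:ℝ) - ((n:ℝ) - 1) * (1 - p) = 1 - u from by rw [hu_eq],
        max_eq_right (by rw [hK1] at hKu; linarith)]
      congr 1
      rw [hk1', Nat.choose_one_right]
      push_cast
      rw [zero_mul, zero_mul, add_zero, zero_add]
      exact alg3 _ K _ u m b p hNe hK1 hm_def hu_def hb_def hq_def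
    · -- k ≥ 2 : probability 0
      have hckk : ∀ (inst : DecidablePred fun S : Finset (Fin n) =>
          S ∈ {S : Finset (Fin n) | S.card = 1} ∧ S.card = k),
          (@Finset.filter _ _ inst Finset.univ).card = 0 := by
        intro inst
        rw [Finset.card_eq_zero, Finset.eq_empty_iff_forall_notMem]
        intro S hS
        simp only [Finset.mem_filter, Set.mem_setOf_eq] at hS
        omega
      have hK2 : (2:ℝ) ≤ K := by rw [hK_def]; exact_mod_cast h2
      have hmax : max (0:ℝ) (1 - ((n:ℝ) - 1) * (1 - p)) = 0 := by
        rw [hu_eq] at *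
        exact max_eq_left (by linarith)
      rw [hmax, mul_zero, ENNReal.ofReal_zero, heval, hc0' _, hckk _, hck1' _]
      simp
  refine ⟨Finset (Fin n), _, μ, hprob, A, fun i => MeasurableSpace.measurableSet_top,
    hμA, hμAA, ?_⟩
  rw [hset, hfinal, hm_def, hu_def, hq_def]

theorem stmt_13 (n : ℕ) (hn : 2 ≤ n) (p : ℝ) (hp0 : 0 ≤ p) (hp1 : p ≤ 1) :
    (∀ (Ω : Type) (_ : MeasurableSpace Ω) (μ : Measure Ω), IsProbabilityMeasure μ →
      ∀ A : Fin n → Set Ω, (∀ i, MeasurableSet (A i)) →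
        (∀ i, μ (A i) = ENNReal.ofReal p) →
        (∀ i j, i ≠ j → μ (A i ∩ A j) = ENNReal.ofReal (p ^ 2)) →
        ENNReal.ofReal ((n : ℝ) * (1 - p) * max 0 (1 - ((n : ℝ) - 1) * (1 - p))) ≤
          μ {ω | (∑ i, (A i).indicator (fun _ => (1 : ℕ)) ω) = n - 1}) ∧
    (∃ (Ω : Type) (_ : MeasurableSpace Ω) (μ : Measure Ω) (_ : IsProbabilityMeasure μ)
      (A : Fin n → Set Ω),
      (∀ i, MeasurableSet (A i)) ∧
      (∀ i, μ (A i) = ENNReal.ofReal p) ∧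
      (∀ i j, i ≠ j → μ (A i ∩ A j) = ENNReal.ofReal (p ^ 2)) ∧
      μ {ω | (∑ i, (A i).indicator (fun _ => (1 : ℕ)) ω) = n - 1} =
        ENNReal.ofReal ((n : ℝ) * (1 - p) * max 0 (1 - ((n : ℝ) - 1) * (1 - p)))) := by
  constructor
  · intro Ω mΩ μ hμ A hmeas h1 h2
    exact lb_aux n hn p hp0 hp1 Ω μ hμ A hmeas h1 h2
  · exact constr n hn p hp0 hp1
end
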